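/- If b > 1 and α > 0, then p₆(x) = 4b²(1+b⁴α⁶)x⁶ + α²(b⁴-1)x⁵ + b²α⁴(b⁴-1)x⁴ + 2b⁴(1+α⁶)x³ + b²α²(b⁴-1)x² + α⁴(b⁴-1)x + b²(b⁴+α⁶) has no positive real root; hence the map g(x) = α²(1+b²x³)/(b²+x³) has no periodic points of prime period 2 in (0,∞). -/

import Mathlib

/-- If `b > 1` and `α > 0`, then `p₆` has no positive real root; hence
`g(x) = α²(1+b²x³)/(b²+x³)` has no periodic points of prime period 2 in
`(0,∞)`. -/
theorem stmt_14 (α b : ℝ) (hα : 0 < α) (hb : 1 < b)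
    (g : ℝ → ℝ) (hg : ∀ x : ℝ, g x = α ^ 2 * (1 + b ^ 2 * x ^ 3) / (b ^ 2 + x ^ 3)) :
    (∀ x : ℝ, 0 < x →
      4 * b ^ 2 * (1 + b ^ 4 * α ^ 6) * x ^ 6 + α ^ 2 * (b ^ 4 - 1) * x ^ 5
        + b ^ 2 * α ^ 4 * (b ^ 4 - 1) * x ^ 4 + 2 * b ^ 4 * (1 + α ^ 6) * x ^ 3
        + b ^ 2 * α ^ 2 * (b ^ 4 - 1) * x ^ 2 + α ^ 4 * (b ^ 4 - 1) * x
        + b ^ 2 * (b ^ 4 + α ^ 6) ≠ 0) ∧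
    ¬ ∃ x : ℝ, 0 < x ∧ g (g x) = x ∧ g x ≠ x := by
  have hb0 : (0:ℝ) < b := lt_trans one_pos hb
  have hb4 : (1:ℝ) < b ^ 4 := one_lt_pow₀ hb (by norm_num)
  constructor
  · intro x hx
    have h1 : 0 < 4 * b ^ 2 * (1 + b ^ 4 * α ^ 6) * x ^ 6 + α ^ 2 * (b ^ 4 - 1) * x ^ 5
        + b ^ 2 * α ^ 4 * (b ^ 4 - 1) * x ^ 4 + 2 * b ^ 4 * (1 + α ^ 6) * x ^ 3
        + b ^ 2 * α ^ 2 * (b ^ 4 - 1) * x ^ 2 + α ^ 4 * (b ^ 4 - 1) * x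
        + b ^ 2 * (b ^ 4 + α ^ 6) := by
      have t1 : (0:ℝ) < 4 * b ^ 2 * (1 + b ^ 4 * α ^ 6) * x ^ 6 := by positivity
      have t2 : (0:ℝ) ≤ α ^ 2 * (b ^ 4 - 1) * x ^ 5 := by
        have := sub_pos.mpr hb4; positivity
      have t3 : (0:ℝ) ≤ b ^ 2 * α ^ 4 * (b ^ 4 - 1) * x ^ 4 := by
        have := sub_pos.mpr hb4; positivity
      have t4 : (0:ℝ) < 2 * b ^ 4 * (1 + α ^ 6) * x ^ 3 := by positivity
      have t5 : (0:ℝ) ≤ b ^ 2 * α ^ 2 * (b ^ 4 - 1) * x ^ 2 := by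
        have := sub_pos.mpr hb4; positivity
      have t6 : (0:ℝ) ≤ α ^ 4 * (b ^ 4 - 1) * x := by
        have := sub_pos.mpr hb4; positivity
      have t7 : (0:ℝ) < b ^ 2 * (b ^ 4 + α ^ 6) := by positivity
      linarith
    exact ne_of_gt h1
  · rintro ⟨x, hx, hgg, hne⟩
    set y := g x with hy
    have hD : (0:ℝ) < b ^ 2 + x ^ 3 := by positivity
    have hyval : y * (b ^ 2 + x ^ 3) = α ^ 2 * (1 + b ^ 2 * x ^ 3) := by
      rw [hy, hg x, div_mul_cancel₀ _ (ne_of_gt hD)]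
    have hypos : 0 < y := by
      have hN : 0 < α ^ 2 * (1 + b ^ 2 * x ^ 3) := by positivity
      nlinarith
    have hDy : (0:ℝ) < b ^ 2 + y ^ 3 := by positivity
    have hggval : α ^ 2 * (1 + b ^ 2 * y ^ 3) = x * (b ^ 2 + y ^ 3) := by
      have := hgg
      rw [hg y] at this
      field_simp at this
      linarith [this]
    -- cube of hyval
    have hcube : y ^ 3 * (b ^ 2 + x ^ 3) ^ 3 = (α ^ 2 * (1 + b ^ 2 * x ^ 3)) ^ 3 := by
      have := congrArg (· ^ 3) hyval
      simpa [mul_pow] using this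
    -- multiply hggval by (b²+x³)³ and substitute
    have hnum : α ^ 2 * ((b ^ 2 + x ^ 3) ^ 3 + b ^ 2 * (α ^ 2 * (1 + b ^ 2 * x ^ 3)) ^ 3)
        - x * (b ^ 2 * (b ^ 2 + x ^ 3) ^ 3 + (α ^ 2 * (1 + b ^ 2 * x ^ 3)) ^ 3) = 0 := by
      have h := congrArg (· * (b ^ 2 + x ^ 3) ^ 3) hggval
      linear_combination h + (x - α ^ 2 * b ^ 2) * hcube
    -- factorization: num = -(x(b²+x³) - α²(1+b²x³)) * Q
    have hfact : (x * (b ^ 2 + x ^ 3) - α ^ 2 * (1 + b ^ 2 * x ^ 3)) *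
        (b ^ 2 * (1 + b ^ 4 * α ^ 6) * x ^ 6 + α ^ 2 * (b ^ 4 - 1) * x ^ 5
        + b ^ 2 * α ^ 4 * (b ^ 4 - 1) * x ^ 4 + 2 * b ^ 4 * (1 + α ^ 6) * x ^ 3
        + b ^ 2 * α ^ 2 * (b ^ 4 - 1) * x ^ 2 + α ^ 4 * (b ^ 4 - 1) * x
        + b ^ 2 * (b ^ 4 + α ^ 6)) = 0 := by
      linear_combination -hnum
    have hQ : (0:ℝ) < b ^ 2 * (1 + b ^ 4 * α ^ 6) * x ^ 6 + α ^ 2 * (b ^ 4 - 1) * x ^ 5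
        + b ^ 2 * α ^ 4 * (b ^ 4 - 1) * x ^ 4 + 2 * b ^ 4 * (1 + α ^ 6) * x ^ 3
        + b ^ 2 * α ^ 2 * (b ^ 4 - 1) * x ^ 2 + α ^ 4 * (b ^ 4 - 1) * x
        + b ^ 2 * (b ^ 4 + α ^ 6) := by
      have hs := sub_pos.mpr hb4
      have t1 : (0:ℝ) < b ^ 2 * (1 + b ^ 4 * α ^ 6) * x ^ 6 := by positivity
      have t2 : (0:ℝ) ≤ α ^ 2 * (b ^ 4 - 1) * x ^ 5 := by positivity
      have t3 : (0:ℝ) ≤ b ^ 2 * α ^ 4 * (b ^ 4 - 1) * x ^ 4 := by positivity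
      have t4 : (0:ℝ) < 2 * b ^ 4 * (1 + α ^ 6) * x ^ 3 := by positivity
      have t5 : (0:ℝ) ≤ b ^ 2 * α ^ 2 * (b ^ 4 - 1) * x ^ 2 := by positivity
      have t6 : (0:ℝ) ≤ α ^ 4 * (b ^ 4 - 1) * x := by positivity
      have t7 : (0:ℝ) < b ^ 2 * (b ^ 4 + α ^ 6) := by positivity
      linarith
    have hF : x * (b ^ 2 + x ^ 3) - α ^ 2 * (1 + b ^ 2 * x ^ 3) = 0 := by
      rcases mul_eq_zero.mp hfact with h | h
      · exact h
      · exact absurd h (ne_of_gt hQ)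
    apply hne
    rw [hy, hg x]
    rw [div_eq_iff (ne_of_gt hD)]
    linarith
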